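/- The Rankin–Cohen polynomial equals a Jacobi polynomial: RC^{λ₁,λ₂}_a(x,y) = (−1)^a · P^{λ₁−1, −λ₁−λ₂−2a+1}_a(x,y), where P^{α,β}_ℓ(x,y) := y^ℓ · P^{α,β}_ℓ(2x/y + 1) is the homogenization of the Jacobi polynomial. -/

import Mathlib

noncomputable section
open Finset

/-- Generalized binomial coefficient `C(μ, k) = μ(μ−1)⋯(μ−k+1)/k!`. -/
def gbinom (μ : ℂ) (k : ℕ) : ℂ := (∏ i ∈ Finset.range k, (μ - i)) / (k.factorial : ℂ)

/-- Pochhammer symbol `(z)_k = z(z+1)⋯(z+k−1)`. -/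
def poch (z : ℂ) (k : ℕ) : ℂ := ∏ i ∈ Finset.range k, (z + i)

/-- The Rankin–Cohen polynomial
`RC^{λ₁,λ₂}_a(x,y) = Σ_{ℓ=0}^{a} (−1)^ℓ C(λ₁+a−1, ℓ) C(λ₂+a−1, a−ℓ) x^{a−ℓ} y^ℓ`. -/
def RC (a : ℕ) (l1 l2 x y : ℂ) : ℂ :=
  ∑ ℓ ∈ Finset.range (a + 1),
    (-1 : ℂ) ^ ℓ * gbinom (l1 + a - 1) ℓ * gbinom (l2 + a - 1) (a - ℓ) * x ^ (a - ℓ) * y ^ ℓ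

/-- The Jacobi polynomial `P^{α,β}_ℓ(t)`, written via Pochhammer symbols:
`P^{α,β}_ℓ(t) = Σ_m (α+m+1)_{ℓ−m}/(ℓ−m)! · (α+β+ℓ+1)_m/m! · ((t−1)/2)^m`. -/
def jacobiP (α β : ℂ) (ℓ : ℕ) (t : ℂ) : ℂ :=
  ∑ m ∈ Finset.range (ℓ + 1),
    poch (α + m + 1) (ℓ - m) / ((ℓ - m).factorial : ℂ) *
      (poch (α + β + ℓ + 1) m / (m.factorial : ℂ)) * ((t - 1) / 2) ^ m

/-- The homogenized (two-variable) Jacobi polynomial `P^{α,β}_ℓ(x,y) = y^ℓ P^{α,β}_ℓ(2x/y+1)`. -/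
def jacobiP2 (α β : ℂ) (ℓ : ℕ) (x y : ℂ) : ℂ :=
  ∑ m ∈ Finset.range (ℓ + 1),
    poch (α + m + 1) (ℓ - m) / ((ℓ - m).factorial : ℂ) *
      (poch (α + β + ℓ + 1) m / (m.factorial : ℂ)) * x ^ m * y ^ (ℓ - m)

/-- The Gegenbauer polynomial
`C^α_ℓ(t) = Σ_{k=0}^{[ℓ/2]} (−1)^k (α)_{ℓ−k}/((ℓ−2k)! k!) (2t)^{ℓ−2k}`. -/
def gegen (α : ℂ) (ℓ : ℕ) (t : ℂ) : ℂ :=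
  ∑ k ∈ Finset.range (ℓ / 2 + 1),
    (-1 : ℂ) ^ k * poch α (ℓ - k) / (((ℓ - 2 * k).factorial : ℂ) * (k.factorial : ℂ)) *
      (2 * t) ^ (ℓ - 2 * k)

/-- The two-variable Gegenbauer polynomial `C^α_ℓ(s,t) = s^{ℓ/2} C^α_ℓ(t/√s)`. -/
def gegen2 (α : ℂ) (ℓ : ℕ) (s t : ℂ) : ℂ :=
  ∑ k ∈ Finset.range (ℓ / 2 + 1),
    (-1 : ℂ) ^ k * poch α (ℓ - k) / (((ℓ - 2 * k).factorial : ℂ) * (k.factorial : ℂ)) *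
      s ^ k * (2 * t) ^ (ℓ - 2 * k)

/-- Gegenbauer polynomial with integer index, with the convention `C^α_{−1} := 0`. -/
def gegenZ (α : ℂ) (n : ℤ) (t : ℂ) : ℂ := if n < 0 then 0 else gegen α n.toNat t

/-- Two-variable Gegenbauer polynomial with integer index, `C^α_{−1} := 0`. -/
def gegen2Z (α : ℂ) (n : ℤ) (s t : ℂ) : ℂ := if n < 0 then 0 else gegen2 α n.toNat s t

lemma gbinom_eq_poch (l : ℂ) (a m : ℕ) (hm : m ≤ a) :
    gbinom (l + a - 1) (a - m) = poch (l + m) (a - m) / ((a - m).factorial : ℂ) := by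
  unfold gbinom poch
  congr 1
  rw [← Finset.prod_range_reflect]
  apply Finset.prod_congr rfl
  intro i hi
  simp only [Finset.mem_range] at hi
  have h1 : ((a - m - 1 - i : ℕ) : ℂ) = (a : ℂ) - m - 1 - i := by
    push_cast [Nat.cast_sub (by omega : i ≤ a - m - 1), Nat.cast_sub (by omega : 1 ≤ a - m),
      Nat.cast_sub hm]
    ring
  rw [h1]; ring

lemma gbinom_eq_poch_neg (l : ℂ) (a m : ℕ) :
    gbinom (l + a - 1) m = (-1 : ℂ) ^ m * poch (-l - a + 1) m / (m.factorial : ℂ) := by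
  have key : (-1 : ℂ) ^ m * poch (-l - a + 1) m = ∏ i ∈ Finset.range m, (l + a - 1 - i) := by
    unfold poch
    rw [show ((-1 : ℂ)) ^ m = ∏ _i ∈ Finset.range m, (-1 : ℂ) by simp,
      ← Finset.prod_mul_distrib]
    exact Finset.prod_congr rfl fun i _ => by ring
  unfold gbinom
  rw [← key]

/-- The Rankin–Cohen polynomial equals a Jacobi polynomial:
`RC^{λ₁,λ₂}_a(x,y) = (−1)^a P^{λ₁−1, −λ₁−λ₂−2a+1}_a(x,y)`. -/
theorem RC_eq_jacobi (a : ℕ) (l1 l2 x y : ℂ) :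
    RC a l1 l2 x y = (-1 : ℂ) ^ a * jacobiP2 (l1 - 1) (-l1 - l2 - 2 * a + 1) a x y := by
  unfold RC jacobiP2
  rw [Finset.mul_sum, ← Finset.sum_range_reflect]
  apply Finset.sum_congr rfl
  intro m hm
  simp only [Finset.mem_range] at hm
  have hm' : m ≤ a := by omega
  have h1 : a + 1 - 1 - m = a - m := by omega
  have h2 : a - (a - m) = m := Nat.sub_sub_self hm'
  rw [h1, h2]
  have e1 : l1 - 1 + (m : ℂ) + 1 = l1 + m := by ring
  have e2 : l1 - 1 + (-l1 - l2 - 2 * (a : ℂ) + 1) + a + 1 = -l2 - a + 1 := by ring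
  rw [e1, e2, gbinom_eq_poch l1 a m hm', gbinom_eq_poch_neg l2 a m]
  have hsign : (-1 : ℂ) ^ (a - m) * (-1 : ℂ) ^ m = (-1 : ℂ) ^ a := by
    rw [← pow_add, Nat.sub_add_cancel hm']
  linear_combination hsign * (poch (l1 + m) (a - m) * poch (-l2 - a + 1) m * x ^ m * y ^ (a - m)
    / (((a - m).factorial : ℂ) * (m.factorial : ℂ)))
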